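/- The Riccati recursion preserves positive semidefiniteness: if V_{t+1} is symmetric positive semidefinite, [[Q_xx,Q_ux^T],[Q_ux,Q_uu]] is positive semidefinite, and Q_uu is positive definite, then V_t = Q_xx + F_x^T V_{t+1} F_x - (Q_ux + F_u^T V_{t+1} F_x)^T (Q_uu + F_u^T V_{t+1} F_u)^{-1} (Q_ux + F_u^T V_{t+1} F_x) is symmetric positive semidefinite. -/

import Mathlib

open Matrix

theorem riccati_preserves_psd
    {n m : ℕ} (Qxx Vnext : Matrix (Fin n) (Fin n) ℝ)
    (Quu : Matrix (Fin m) (Fin m) ℝ) (Qux : Matrix (Fin m) (Fin n) ℝ)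
    (Fx : Matrix (Fin n) (Fin n) ℝ) (Fu : Matrix (Fin n) (Fin m) ℝ)
    (hQ : (Matrix.fromBlocks Qxx Qux.transpose Qux Quu).PosSemidef)
    (hQuu : Quu.PosDef)
    (hV : Vnext.PosSemidef) :
    (Qxx + Fx.transpose * Vnext * Fx -
      (Qux + Fu.transpose * Vnext * Fx).transpose *
        (Quu + Fu.transpose * Vnext * Fu)⁻¹ *
        (Qux + Fu.transpose * Vnext * Fx)).PosSemidef := by
  set A := Qxx + Fx.transpose * Vnext * Fx with hA
  set B := Qux + Fu.transpose * Vnext * Fx with hB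
  set D := Quu + Fu.transpose * Vnext * Fu with hD
  have hDpd : D.PosDef := by
    have : (Fu.transpose * Vnext * Fu).PosSemidef := by
      simpa [conjTranspose_eq_transpose_of_trivial] using hV.conjTranspose_mul_mul_same Fu
    exact hQuu.add_posSemidef this
  have hVs : Vnextᵀ = Vnext := by
    rw [← conjTranspose_eq_transpose_of_trivial]; exact hV.isHermitian.eq
  haveI : Invertible D := hDpd.isUnit.invertible
  have hG : ((fromCols Fx Fu)ᴴ * Vnext * fromCols Fx Fu).PosSemidef :=
    hV.conjTranspose_mul_mul_same _
  have hGeq : (fromCols Fx Fu)ᴴ * Vnext * fromCols Fx Fu =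
      fromBlocks (Fx.transpose * Vnext * Fx) (Fx.transpose * Vnext * Fu)
        (Fu.transpose * Vnext * Fx) (Fu.transpose * Vnext * Fu) := by
    rw [conjTranspose_eq_transpose_of_trivial, transpose_fromCols, fromRows_mul, fromRows_mul_fromCols]
  rw [hGeq] at hG
  have hsum : (fromBlocks A Bᴴ B D).PosSemidef := by
    have := hQ.add hG
    rw [Matrix.fromBlocks_add] at this
    have hBH : Bᴴ = Qux.transpose + Fx.transpose * Vnext * Fu := by
      rw [conjTranspose_eq_transpose_of_trivial]
      simp [hB, hVs, Matrix.transpose_add, Matrix.transpose_mul, Matrix.mul_assoc]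
    rw [hA, hB, hD, hBH]
    exact this
  have := (Matrix.PosDef.fromBlocks₂₂ A Bᴴ hDpd).mp hsum
  simp only [conjTranspose_eq_transpose_of_trivial, transpose_transpose] at this
  exact this
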